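/- (RK under multiplicative noise.) Let A ∈ ℝ^{m×n}, E ∈ ℝ^{m×m}, F ∈ ℝ^{n×n} with I_m + E and I_n + F invertible, and set Ã := (I_m + E) A (I_n + F) and ΔA := EA + AF + EAF (so Ã = A + ΔA). Assume every row ã_i of Ã is nonzero. Let x_LS ∈ ℝ^n, b := A x_LS, ε ∈ ℝ^m, b̃ := b + ε, p_i := ‖ã_i‖²/‖Ã‖_F², and K_i(x) := x − ((⟨ã_i, x⟩ − b̃_i)/‖ã_i‖²) ã_i. Let σ > 0 satisfy ‖Ã z‖ ≥ σ‖z‖ for every z ∈ range(Ãᵀ), and let x_0 − x_LS ∈ range(Ãᵀ). Then for every k ≥ 0, Σ_{(i_1,…,i_k) ∈ {1,…,m}^k} p_{i_1}⋯p_{i_k} ‖K_{i_k}(⋯K_{i_1}(x_0)⋯) − x_LS‖² ≤ (1 − σ²/‖Ã‖_F²)^k ‖x_0 − x_LS‖² + ‖ΔA x_LS − ε‖²/σ². -/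

import Mathlib

open Matrix
open scoped RealInnerProductSpace

/-- The `i`-th row of a matrix, viewed as a vector in Euclidean space. -/
noncomputable def row {m n : ℕ} (M : Matrix (Fin m) (Fin n) ℝ) (i : Fin m) :
    EuclideanSpace ℝ (Fin n) :=
  (WithLp.equiv 2 (Fin n → ℝ)).symm (M i)

/-- Matrix-vector multiplication as a map between Euclidean spaces. -/
noncomputable def mulVecE {m n : ℕ} (M : Matrix (Fin m) (Fin n) ℝ)
    (x : EuclideanSpace ℝ (Fin n)) : EuclideanSpace ℝ (Fin m) :=
  Matrix.toEuclideanLin M x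

/-- The Kaczmarz update of `x` for the system `M y = c`, using row `i`:
`x ↦ x - ((⟨mᵢ, x⟩ - cᵢ)/‖mᵢ‖²) mᵢ`. -/
noncomputable def kaczmarz {m n : ℕ} (M : Matrix (Fin m) (Fin n) ℝ) (c : Fin m → ℝ) (i : Fin m)
    (x : EuclideanSpace ℝ (Fin n)) : EuclideanSpace ℝ (Fin n) :=
  x - ((⟪_root_.row M i, x⟫ - c i) / ‖_root_.row M i‖ ^ 2) • _root_.row M i

/-- Iterated Kaczmarz updates along the index sequence `is = (i₁, …, i_k)`,
applying row `i₁` first: `K_{i_k}(⋯ K_{i₁}(x₀) ⋯)`. -/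
noncomputable def kaczmarzIter {m n k : ℕ} (M : Matrix (Fin m) (Fin n) ℝ) (c : Fin m → ℝ)
    (is : Fin k → Fin m) (x0 : EuclideanSpace ℝ (Fin n)) : EuclideanSpace ℝ (Fin n) :=
  (List.ofFn is).foldl (fun x i => kaczmarz M c i x) x0

/-- The squared Frobenius norm `‖M‖_F² = Σ_{i,j} M_{ij}²`. -/
noncomputable def frobSq {m n : ℕ} (M : Matrix (Fin m) (Fin n) ℝ) : ℝ :=
  ∑ i, ∑ j, (M i j) ^ 2

/-- The row space `range(Mᵀ)` of a matrix, as a submodule of Euclidean space. -/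
noncomputable def rowSpace {m n : ℕ} (M : Matrix (Fin m) (Fin n) ℝ) :
    Submodule ℝ (EuclideanSpace ℝ (Fin n)) :=
  LinearMap.range (Matrix.toEuclideanLin Mᵀ)

/-- The spectral norm (operator 2-norm) of a matrix. -/
noncomputable def specNorm {m n : ℕ} (M : Matrix (Fin m) (Fin n) ℝ) : ℝ :=
  ‖LinearMap.toContinuousLinearMap (Matrix.toEuclideanLin M)‖

section RKHelpers

lemma rk_row_apply {m n : ℕ} (M : Matrix (Fin m) (Fin n) ℝ) (i : Fin m) (j : Fin n) :
    _root_.row M i j = M i j := rfl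

lemma rk_mulVecE_apply {m n : ℕ} (M : Matrix (Fin m) (Fin n) ℝ) (x : EuclideanSpace ℝ (Fin n))
    (i : Fin m) : mulVecE M x i = ∑ j, M i j * x j := rfl

lemma rk_normsq_eq {n : ℕ} (v : EuclideanSpace ℝ (Fin n)) : ‖v‖ ^ 2 = ∑ i, v i ^ 2 := by
  rw [← real_inner_self_eq_norm_sq]
  simp only [PiLp.inner_apply, RCLike.inner_apply, conj_trivial, sq]

lemma rk_inner_row {m n : ℕ} (M : Matrix (Fin m) (Fin n) ℝ) (x : EuclideanSpace ℝ (Fin n))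
    (i : Fin m) : ⟪_root_.row M i, x⟫ = mulVecE M x i := by
  simp [PiLp.inner_apply, rk_row_apply, rk_mulVecE_apply, mul_comm]

lemma rk_frobSq_eq {m n : ℕ} (M : Matrix (Fin m) (Fin n) ℝ) :
    frobSq M = ∑ i, ‖_root_.row M i‖ ^ 2 := by
  simp [frobSq, rk_normsq_eq, rk_row_apply]

lemma rk_normsq_mulVecE {m n : ℕ} (M : Matrix (Fin m) (Fin n) ℝ) (z : EuclideanSpace ℝ (Fin n)) :
    ‖mulVecE M z‖ ^ 2 = ∑ i, ⟪_root_.row M i, z⟫ ^ 2 := by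
  rw [rk_normsq_eq]
  simp only [rk_inner_row]

lemma rk_row_mem {m n : ℕ} (M : Matrix (Fin m) (Fin n) ℝ) (i : Fin m) :
    _root_.row M i ∈ rowSpace M := by
  refine ⟨(WithLp.equiv 2 (Fin m → ℝ)).symm (Pi.single i 1), ?_⟩
  ext j
  show (Mᵀ *ᵥ Pi.single i 1) j = M i j
  simp [Matrix.mulVec, dotProduct, Pi.single_apply]

lemma rk_kaczmarz_sub_mem {m n : ℕ} (M : Matrix (Fin m) (Fin n) ℝ) (c : Fin m → ℝ) (i : Fin m)
    (x xLS : EuclideanSpace ℝ (Fin n)) (hx : x - xLS ∈ rowSpace M) :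
    kaczmarz M c i x - xLS ∈ rowSpace M := by
  have : kaczmarz M c i x - xLS
      = (x - xLS) - ((⟪_root_.row M i, x⟫ - c i) / ‖_root_.row M i‖ ^ 2) • _root_.row M i := by
    rw [kaczmarz, sub_right_comm]
  rw [this]
  exact Submodule.sub_mem _ hx (Submodule.smul_mem _ _ (rk_row_mem M i))

lemma rk_normsq_kaczmarz {m n : ℕ} (M : Matrix (Fin m) (Fin n) ℝ) (c : Fin m → ℝ) (i : Fin m)
    (x xLS : EuclideanSpace ℝ (Fin n)) (hi : _root_.row M i ≠ 0) :
    ‖kaczmarz M c i x - xLS‖ ^ 2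
      = ‖x - xLS‖ ^ 2 - ⟪_root_.row M i, x - xLS⟫ ^ 2 / ‖_root_.row M i‖ ^ 2
        + (⟪_root_.row M i, xLS⟫ - c i) ^ 2 / ‖_root_.row M i‖ ^ 2 := by
  set a := _root_.row M i with ha
  have hna : ‖a‖ ≠ 0 := norm_ne_zero_iff.mpr hi
  set e := x - xLS with he
  set s : ℝ := ⟪a, e⟫ with hs
  set r : ℝ := ⟪a, xLS⟫ - c i with hr
  have hinner : ⟪a, x⟫ - c i = s + r := by
    have : x = e + xLS := by simp [he]
    rw [this, inner_add_right]; ring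
  have h1 : kaczmarz M c i x - xLS = e - ((s + r) / ‖a‖ ^ 2) • a := by
    rw [kaczmarz, ← ha, hinner, sub_right_comm, ← he]
  have hcomm : (⟪e, a⟫ : ℝ) = s := real_inner_comm a e
  rw [h1, @norm_sub_sq_real, real_inner_smul_right, hcomm,
    norm_smul, mul_pow, Real.norm_eq_abs, sq_abs]
  field_simp
  ring

lemma rk_frobSq_pos {m n : ℕ} (M : Matrix (Fin m) (Fin n) ℝ) (hm : 0 < m)
    (hrow : ∀ i, _root_.row M i ≠ 0) : 0 < frobSq M := by
  rw [rk_frobSq_eq]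
  have : Nonempty (Fin m) := ⟨⟨0, hm⟩⟩
  exact Finset.sum_pos (fun i _ => pow_pos (norm_pos_iff.mpr (hrow i)) 2) Finset.univ_nonempty

lemma rk_exp_step {m n : ℕ} (M : Matrix (Fin m) (Fin n) ℝ) (c : Fin m → ℝ)
    (hrow : ∀ i, _root_.row M i ≠ 0) (hΦ : 0 < frobSq M)
    (σ : ℝ) (hσ : 0 ≤ σ) (hσM : ∀ z ∈ rowSpace M, σ * ‖z‖ ≤ ‖mulVecE M z‖)
    (x xLS : EuclideanSpace ℝ (Fin n)) (hx : x - xLS ∈ rowSpace M) :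
    ∑ i, (‖_root_.row M i‖ ^ 2 / frobSq M) * ‖kaczmarz M c i x - xLS‖ ^ 2
      ≤ (1 - σ ^ 2 / frobSq M) * ‖x - xLS‖ ^ 2
        + (∑ i, (⟪_root_.row M i, xLS⟫ - c i) ^ 2) / frobSq M := by
  set Φ := frobSq M with hΦdef
  have hΦne : Φ ≠ 0 := ne_of_gt hΦ
  have key : ∑ i, (‖_root_.row M i‖ ^ 2 / Φ) * ‖kaczmarz M c i x - xLS‖ ^ 2
      = ‖x - xLS‖ ^ 2 - ‖mulVecE M (x - xLS)‖ ^ 2 / Φ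
        + (∑ i, (⟪_root_.row M i, xLS⟫ - c i) ^ 2) / Φ := by
    have h1 : ∀ i : Fin m, (‖_root_.row M i‖ ^ 2 / Φ) * ‖kaczmarz M c i x - xLS‖ ^ 2
        = (‖_root_.row M i‖ ^ 2 / Φ) * ‖x - xLS‖ ^ 2 - ⟪_root_.row M i, x - xLS⟫ ^ 2 / Φ
          + (⟪_root_.row M i, xLS⟫ - c i) ^ 2 / Φ := by
      intro i
      have hna : ‖_root_.row M i‖ ≠ 0 := norm_ne_zero_iff.mpr (hrow i)
      rw [rk_normsq_kaczmarz M c i x xLS (hrow i)]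
      field_simp
    rw [Finset.sum_congr rfl (fun i _ => h1 i)]
    rw [Finset.sum_add_distrib, Finset.sum_sub_distrib, ← Finset.sum_div, ← Finset.sum_div,
      ← Finset.sum_mul, ← Finset.sum_div, rk_normsq_mulVecE, ← rk_frobSq_eq, ← hΦdef,
      div_mul_eq_mul_div, mul_div_assoc]
    have hc : Φ * (‖x - xLS‖ ^ 2 / Φ) = ‖x - xLS‖ ^ 2 := by field_simp
    rw [hc]
  rw [key]
  have hb : σ ^ 2 * ‖x - xLS‖ ^ 2 ≤ ‖mulVecE M (x - xLS)‖ ^ 2 := by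
    have := hσM _ hx
    have h0 : 0 ≤ σ * ‖x - xLS‖ := by positivity
    nlinarith [this, h0]
  have : ‖x - xLS‖ ^ 2 - ‖mulVecE M (x - xLS)‖ ^ 2 / Φ
      ≤ (1 - σ ^ 2 / Φ) * ‖x - xLS‖ ^ 2 := by
    rw [sub_mul, one_mul, div_mul_eq_mul_div]
    have h2 : σ ^ 2 * ‖x - xLS‖ ^ 2 / Φ ≤ ‖mulVecE M (x - xLS)‖ ^ 2 / Φ := by gcongr
    linarith
  linarith

lemma rk_iter_cons {m n k : ℕ} (M : Matrix (Fin m) (Fin n) ℝ) (c : Fin m → ℝ)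
    (i : Fin m) (js : Fin k → Fin m) (x0 : EuclideanSpace ℝ (Fin n)) :
    kaczmarzIter M c (Fin.cons i js) x0 = kaczmarzIter M c js (kaczmarz M c i x0) := by
  simp [kaczmarzIter, List.ofFn_succ, Fin.cons_zero, Fin.cons_succ, Function.comp]

lemma rk_main_ind {m n : ℕ} (M : Matrix (Fin m) (Fin n) ℝ) (c : Fin m → ℝ)
    (hrow : ∀ i, _root_.row M i ≠ 0) (hΦ : 0 < frobSq M)
    (σ : ℝ) (hσ : 0 ≤ σ) (hσM : ∀ z ∈ rowSpace M, σ * ‖z‖ ≤ ‖mulVecE M z‖)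
    (xLS : EuclideanSpace ℝ (Fin n))
    (hα : 0 ≤ 1 - σ ^ 2 / frobSq M) :
    ∀ (k : ℕ) (x0 : EuclideanSpace ℝ (Fin n)), x0 - xLS ∈ rowSpace M →
      ∑ is : Fin k → Fin m,
          (∏ j, ‖_root_.row M (is j)‖ ^ 2 / frobSq M) * ‖kaczmarzIter M c is x0 - xLS‖ ^ 2
        ≤ (1 - σ ^ 2 / frobSq M) ^ k * ‖x0 - xLS‖ ^ 2
          + ((∑ i, (⟪_root_.row M i, xLS⟫ - c i) ^ 2) / frobSq M)
              * ∑ j ∈ Finset.range k, (1 - σ ^ 2 / frobSq M) ^ j := by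
  set Φ := frobSq M with hΦdef
  set α : ℝ := 1 - σ ^ 2 / Φ with hαdef
  set R : ℝ := (∑ i, (⟪_root_.row M i, xLS⟫ - c i) ^ 2) / Φ with hRdef
  have hR0 : 0 ≤ R := by
    apply div_nonneg _ (le_of_lt hΦ)
    exact Finset.sum_nonneg fun i _ => sq_nonneg _
  have hp0 : ∀ i : Fin m, 0 ≤ ‖_root_.row M i‖ ^ 2 / Φ := fun i => by positivity
  have hpsum : ∑ i, ‖_root_.row M i‖ ^ 2 / Φ = 1 := by
    rw [← Finset.sum_div, ← rk_frobSq_eq, ← hΦdef, div_self (ne_of_gt hΦ)]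
  intro k
  induction k with
  | zero =>
    intro x0 _
    simp [kaczmarzIter, Fintype.sum_unique]
  | succ k ih =>
    intro x0 hx0
    have hre : ∑ is : Fin (k+1) → Fin m,
        (∏ j, ‖_root_.row M (is j)‖ ^ 2 / Φ) * ‖kaczmarzIter M c is x0 - xLS‖ ^ 2
      = ∑ i : Fin m, (‖_root_.row M i‖ ^ 2 / Φ) *
          ∑ js : Fin k → Fin m,
            (∏ j, ‖_root_.row M (js j)‖ ^ 2 / Φ) * ‖kaczmarzIter M c js (kaczmarz M c i x0) - xLS‖ ^ 2 := by
      rw [← Equiv.sum_comp (Fin.consEquiv fun _ => Fin m)]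
      rw [Fintype.sum_prod_type]
      refine Finset.sum_congr rfl fun i _ => ?_
      rw [Finset.mul_sum]
      refine Finset.sum_congr rfl fun js _ => ?_
      have hc : (Fin.consEquiv fun _ => Fin m) (i, js) = Fin.cons i js := rfl
      have hprod : (∏ j : Fin (k+1), ‖_root_.row M ((Fin.cons i js : Fin (k+1) → Fin m) j)‖ ^ 2 / Φ)
          = (‖_root_.row M i‖ ^ 2 / Φ) * ∏ j : Fin k, ‖_root_.row M (js j)‖ ^ 2 / Φ := by
        rw [Fin.prod_univ_succ]
        simp
      rw [hc, hprod, rk_iter_cons, mul_assoc]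
    rw [hre]
    have step2 : ∀ i : Fin m,
        (‖_root_.row M i‖ ^ 2 / Φ) * ∑ js : Fin k → Fin m,
            (∏ j, ‖_root_.row M (js j)‖ ^ 2 / Φ) * ‖kaczmarzIter M c js (kaczmarz M c i x0) - xLS‖ ^ 2
        ≤ (‖_root_.row M i‖ ^ 2 / Φ) *
            (α ^ k * ‖kaczmarz M c i x0 - xLS‖ ^ 2 + R * ∑ j ∈ Finset.range k, α ^ j) := by
      intro i
      exact mul_le_mul_of_nonneg_left
        (ih (kaczmarz M c i x0) (rk_kaczmarz_sub_mem M c i x0 xLS hx0)) (hp0 i)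
    calc ∑ i : Fin m, (‖_root_.row M i‖ ^ 2 / Φ) *
          ∑ js : Fin k → Fin m,
            (∏ j, ‖_root_.row M (js j)‖ ^ 2 / Φ) * ‖kaczmarzIter M c js (kaczmarz M c i x0) - xLS‖ ^ 2
        ≤ ∑ i : Fin m, (‖_root_.row M i‖ ^ 2 / Φ) *
            (α ^ k * ‖kaczmarz M c i x0 - xLS‖ ^ 2 + R * ∑ j ∈ Finset.range k, α ^ j) :=
          Finset.sum_le_sum fun i _ => step2 i
      _ = α ^ k * (∑ i : Fin m, (‖_root_.row M i‖ ^ 2 / Φ) * ‖kaczmarz M c i x0 - xLS‖ ^ 2)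
            + (∑ i : Fin m, ‖_root_.row M i‖ ^ 2 / Φ) * (R * ∑ j ∈ Finset.range k, α ^ j) := by
          simp only [mul_add]
          rw [Finset.sum_add_distrib]
          congr 1
          · rw [Finset.mul_sum]
            exact Finset.sum_congr rfl fun i _ => by ring
          · exact (Finset.sum_mul _ _ _).symm
      _ ≤ α ^ k * (α * ‖x0 - xLS‖ ^ 2 + R) + 1 * (R * ∑ j ∈ Finset.range k, α ^ j) := by
          rw [hpsum]
          have := rk_exp_step M c hrow hΦ σ hσ hσM x0 xLS hx0
          have hαk : (0:ℝ) ≤ α ^ k := pow_nonneg hα k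
          exact add_le_add (mul_le_mul_of_nonneg_left this hαk) le_rfl
      _ = α ^ (k+1) * ‖x0 - xLS‖ ^ 2 + R * ∑ j ∈ Finset.range (k+1), α ^ j := by
          rw [Finset.sum_range_succ]
          ring


end RKHelpers

/-- Randomized Kaczmarz under multiplicative noise:
`Ã = (I + E) A (I + F) = A + ΔA` with `ΔA = EA + AF + EAF`, `I + E` and
`I + F` invertible, applied to `Ã x ≈ b̃` where `b = A x_LS`, `b̃ = b + ε`.
The left-hand side is the expectation `E‖x_k - x_LS‖²`. -/
theorem rk_doubly_noisy_multiplicative {m n : ℕ}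
    (A : Matrix (Fin m) (Fin n) ℝ)
    (E : Matrix (Fin m) (Fin m) ℝ) (F : Matrix (Fin n) (Fin n) ℝ)
    (hE : IsUnit (1 + E)) (hF : IsUnit (1 + F))
    (Atil ΔA : Matrix (Fin m) (Fin n) ℝ)
    (hAtil : Atil = (1 + E) * A * (1 + F))
    (hΔA : ΔA = E * A + A * F + E * A * F)
    (hrow : ∀ i, _root_.row Atil i ≠ 0)
    (xLS : EuclideanSpace ℝ (Fin n)) (ε : EuclideanSpace ℝ (Fin m))
    (σ : ℝ) (hσ : 0 < σ)
    (hσA : ∀ z ∈ rowSpace Atil, σ * ‖z‖ ≤ ‖mulVecE Atil z‖)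
    (x0 : EuclideanSpace ℝ (Fin n)) (hx0 : x0 - xLS ∈ rowSpace Atil)
    (k : ℕ) :
    ∑ is : Fin k → Fin m,
        (∏ j, ‖_root_.row Atil (is j)‖ ^ 2 / frobSq Atil) *
          ‖kaczmarzIter Atil (fun j => mulVecE A xLS j + ε j) is x0 - xLS‖ ^ 2
      ≤ (1 - σ ^ 2 / frobSq Atil) ^ k * ‖x0 - xLS‖ ^ 2
        + ‖mulVecE ΔA xLS - ε‖ ^ 2 / σ ^ 2 := by
  by_cases hm : m = 0
  · subst hm
    have hε : (0:ℝ) ≤ ‖mulVecE ΔA xLS - ε‖ ^ 2 / σ ^ 2 := by positivity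
    cases k with
    | zero =>
      rw [pow_zero, one_mul]
      have h1 : ∑ is : Fin 0 → Fin 0,
          (∏ j, ‖_root_.row Atil (is j)‖ ^ 2 / frobSq Atil) *
            ‖kaczmarzIter Atil (fun j => mulVecE A xLS j + ε j) is x0 - xLS‖ ^ 2
          = ‖x0 - xLS‖ ^ 2 := by
        simp [kaczmarzIter, Fintype.sum_unique]
      rw [h1]
      linarith
    | succ k =>
      have hie : IsEmpty (Fin (k+1) → Fin 0) := ⟨fun f => (f 0).elim0⟩
      rw [Finset.univ_eq_empty, Finset.sum_empty]
      have hΦ0 : frobSq Atil = 0 := by simp [frobSq]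
      rw [hΦ0]
      have : σ ^ 2 / (0:ℝ) = 0 := by simp
      rw [this, sub_zero, one_pow, one_mul]
      positivity
  · have hm' : 0 < m := Nat.pos_of_ne_zero hm
    have hΦ := rk_frobSq_pos Atil hm' hrow
    have hA : Atil = A + ΔA := by
      rw [hAtil, hΔA]
      simp only [Matrix.add_mul, Matrix.mul_add, Matrix.one_mul, Matrix.mul_one]
      abel
    set c : Fin m → ℝ := fun j => mulVecE A xLS j + ε j with hc
    have hres : ∀ i, ⟪_root_.row Atil i, xLS⟫ - c i = (mulVecE ΔA xLS - ε) i := by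
      intro i
      rw [rk_inner_row, hA]
      have hadd : mulVecE (A + ΔA) xLS i = mulVecE A xLS i + mulVecE ΔA xLS i := by
        simp [mulVecE, map_add]
      rw [hadd]
      show _ = mulVecE ΔA xLS i - ε i
      simp [hc]
    have hRval : (∑ i, (⟪_root_.row Atil i, xLS⟫ - c i) ^ 2) = ‖mulVecE ΔA xLS - ε‖ ^ 2 := by
      rw [rk_normsq_eq]
      exact Finset.sum_congr rfl fun i _ => by rw [hres i]
    -- σ² ≤ Φ
    have hσΦ : σ ^ 2 ≤ frobSq Atil := by
      set z := _root_.row Atil ⟨0, hm'⟩ with hzdef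
      have hz : z ≠ 0 := hrow _
      have h1 : σ * ‖z‖ ≤ ‖mulVecE Atil z‖ := hσA z (rk_row_mem Atil _)
      have h2 : ‖mulVecE Atil z‖ ^ 2 ≤ frobSq Atil * ‖z‖ ^ 2 := by
        rw [rk_normsq_mulVecE, rk_frobSq_eq, Finset.sum_mul]
        refine Finset.sum_le_sum fun i _ => ?_
        have habs := abs_real_inner_le_norm (_root_.row Atil i) z
        calc ⟪_root_.row Atil i, z⟫ ^ 2 = |⟪_root_.row Atil i, z⟫| ^ 2 := (sq_abs _).symm
          _ ≤ (‖_root_.row Atil i‖ * ‖z‖) ^ 2 := by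
              exact pow_le_pow_left₀ (abs_nonneg _) habs 2
          _ = ‖_root_.row Atil i‖ ^ 2 * ‖z‖ ^ 2 := by ring
      have hz2 : 0 < ‖z‖ ^ 2 := pow_pos (norm_pos_iff.mpr hz) 2
      have h3 : (σ * ‖z‖) ^ 2 ≤ ‖mulVecE Atil z‖ ^ 2 :=
        pow_le_pow_left₀ (by positivity) h1 2
      have h4 : σ ^ 2 * ‖z‖ ^ 2 ≤ frobSq Atil * ‖z‖ ^ 2 := by nlinarith
      exact le_of_mul_le_mul_right h4 hz2
    have hα : 0 ≤ 1 - σ ^ 2 / frobSq Atil := by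
      rw [sub_nonneg, div_le_one hΦ]; exact hσΦ
    have main := rk_main_ind Atil c hrow hΦ σ hσ.le hσA xLS hα k x0 hx0
    refine main.trans ?_
    rw [hRval]
    have hR0 : (0:ℝ) ≤ ‖mulVecE ΔA xLS - ε‖ ^ 2 := sq_nonneg _
    set α : ℝ := 1 - σ ^ 2 / frobSq Atil with hαdef
    have hσ2Φ : 0 < σ ^ 2 / frobSq Atil := by positivity
    have hG : ∑ j ∈ Finset.range k, α ^ j ≤ frobSq Atil / σ ^ 2 := by
      have hgm : (∑ j ∈ Finset.range k, α ^ j) * (1 - α) = 1 - α ^ k := by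
        have := geom_sum_mul α k
        linarith [this]
      have h1α : 1 - α = σ ^ 2 / frobSq Atil := by rw [hαdef]; ring
      have hαk : 0 ≤ α ^ k := pow_nonneg hα k
      have hle : (∑ j ∈ Finset.range k, α ^ j) * (σ ^ 2 / frobSq Atil) ≤ 1 := by
        rw [← h1α, hgm]; linarith
      calc ∑ j ∈ Finset.range k, α ^ j
          = ((∑ j ∈ Finset.range k, α ^ j) * (σ ^ 2 / frobSq Atil))
              * (frobSq Atil / σ ^ 2) := by
            field_simp
        _ ≤ 1 * (frobSq Atil / σ ^ 2) := by
            apply mul_le_mul_of_nonneg_right hle (by positivity)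
        _ = frobSq Atil / σ ^ 2 := one_mul _
    have : ‖mulVecE ΔA xLS - ε‖ ^ 2 / frobSq Atil * ∑ j ∈ Finset.range k, α ^ j
        ≤ ‖mulVecE ΔA xLS - ε‖ ^ 2 / σ ^ 2 := by
      calc ‖mulVecE ΔA xLS - ε‖ ^ 2 / frobSq Atil * ∑ j ∈ Finset.range k, α ^ j
          ≤ ‖mulVecE ΔA xLS - ε‖ ^ 2 / frobSq Atil * (frobSq Atil / σ ^ 2) :=
            mul_le_mul_of_nonneg_left hG (by positivity)
        _ = ‖mulVecE ΔA xLS - ε‖ ^ 2 / σ ^ 2 := by field_simp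
    linarith
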